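/- Let (λ_n)_{n∈ℕ} be a sequence of nonzero real numbers satisfying a Weyl-type counting bound of order m. Then there is a constant C′ > 0 such that for all t with 0 < t ≤ 1, the series Σ_n exp(−t·λ_n²) converges and is bounded above by C′·t^{−m/2}. -/

import Mathlib

open MeasureTheory Real Set

/-- A sequence `(λ_n)` of real numbers satisfies a Weyl-type counting bound of order `m`
if there is a constant `C > 0` such that for every `T ≥ 0` the set `{n : |λ_n| ≤ T}` is
finite with cardinality at most `C·(1+T)^m`. -/
def WeylBound (lam : ℕ → ℝ) (m : ℕ) : Prop :=
  ∃ C > (0 : ℝ), ∀ T : ℝ, 0 ≤ T →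
    {n : ℕ | |lam n| ≤ T}.Finite ∧ ({n : ℕ | |lam n| ≤ T}.ncard : ℝ) ≤ C * (1 + T) ^ m

/-- The complementary error function `erfc(x) = (2/√π) ∫_x^∞ exp(−ξ²) dξ`. -/
noncomputable def erfc (x : ℝ) : ℝ :=
  (2 / Real.sqrt π) * ∫ ξ in Ioi x, Real.exp (-ξ ^ 2)

lemma aux_summable (m : ℕ) :
    Summable (fun k : ℕ => ((k : ℝ) + 1) ^ m * Real.exp (-(k : ℝ) ^ 2)) := by
  have hr : ‖Real.exp (-1)‖ < 1 := by
    rw [Real.norm_eq_abs, abs_of_pos (Real.exp_pos _)]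
    exact Real.exp_lt_one_iff.2 (by norm_num)
  have h1 : Summable (fun n : ℕ => (n : ℝ) ^ m * Real.exp (-1) ^ n) :=
    summable_pow_mul_geometric_of_norm_lt_one m hr
  have h2 : Summable (fun n : ℕ => ((n : ℝ) + 1) ^ m * Real.exp (-1) ^ (n + 1)) := by
    have := (summable_nat_add_iff 1).2 h1
    refine this.congr fun n => ?_
    push_cast
    ring
  have h3 : Summable (fun n : ℕ => ((n : ℝ) + 1) ^ m * Real.exp (-1) ^ n) := by
    have := h2.mul_right (Real.exp (-1))⁻¹
    refine this.congr fun n => ?_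
    rw [pow_succ, mul_assoc, mul_assoc, mul_inv_cancel₀ (Real.exp_ne_zero _), mul_one]
  refine h3.of_nonneg_of_le (fun n => by positivity) fun n => ?_
  have hle : Real.exp (-(n : ℝ) ^ 2) ≤ Real.exp (-1) ^ n := by
    rw [← Real.exp_nat_mul]
    refine Real.exp_le_exp.2 ?_
    have : (n : ℝ) ≤ (n : ℝ) ^ 2 := by
      exact_mod_cast Nat.le_self_pow two_ne_zero n
    linarith
  exact mul_le_mul_of_nonneg_left hle (by positivity)

/-- Small-time bound: the series `Σ exp(−t·λ_n²)` converges for `0 < t ≤ 1` and is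
`O(t^{−m/2})`. -/
theorem stmt_6 (m : ℕ) (hm : 0 < m) (lam : ℕ → ℝ) (hlam : ∀ n, lam n ≠ 0)
    (hW : WeylBound lam m) :
    ∃ C' > (0 : ℝ), ∀ t : ℝ, 0 < t → t ≤ 1 →
      Summable (fun n : ℕ => Real.exp (-(t * lam n ^ 2))) ∧
      (∑' n : ℕ, Real.exp (-(t * lam n ^ 2))) ≤ C' * t ^ (-(m : ℝ) / 2) := by
  obtain ⟨C, hC, hWb⟩ := hW
  set B : ℝ := ∑' k : ℕ, ((k : ℝ) + 1) ^ m * Real.exp (-(k : ℝ) ^ 2) with hBdef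
  have hBsum := aux_summable m
  have hB1 : (1 : ℝ) ≤ B := by
    have := hBsum.le_tsum 0 (fun j _ => by positivity)
    simpa using this
  have hBpos : (0 : ℝ) < B := lt_of_lt_of_le one_pos hB1
  refine ⟨C * 2 ^ m * B, by positivity, fun t ht ht1 => ?_⟩
  set s : ℝ := Real.sqrt t with hsdef
  have hs : 0 < s := Real.sqrt_pos.2 ht
  have hs1 : s ≤ 1 := by
    rw [hsdef, show (1 : ℝ) = Real.sqrt 1 by simp]
    exact Real.sqrt_le_sqrt ht1
  -- the majorant series
  set g : ℕ → ℝ := fun k => C * (2 * ((k : ℝ) + 1) / s) ^ m * Real.exp (-(k : ℝ) ^ 2)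
    with hgdef
  have hgeq : ∀ k : ℕ, g k = (C * (2 / s) ^ m) * (((k : ℝ) + 1) ^ m * Real.exp (-(k : ℝ) ^ 2)) := by
    intro k
    rw [hgdef]
    simp only [div_pow, mul_pow]
    ring
  have hgsum : Summable g := by
    refine ((hBsum.mul_left (C * (2 / s) ^ m)).congr fun k => ?_)
    rw [hgeq]
  have hgtsum : ∑' k, g k = C * (2 / s) ^ m * B := by
    rw [hBdef, ← tsum_mul_left]
    exact tsum_congr hgeq
  -- identification of the power of t
  have hspow : s ^ m = t ^ ((m : ℝ) / 2) := by
    rw [← Real.rpow_natCast s m, hsdef, Real.sqrt_eq_rpow, ← Real.rpow_mul ht.le]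
    congr 1
    ring
  have htpow : t ^ (-(m : ℝ) / 2) = (s ^ m)⁻¹ := by
    rw [hspow, neg_div, Real.rpow_neg ht.le]
  have hfinal : C * (2 / s) ^ m * B = C * 2 ^ m * B * t ^ (-(m : ℝ) / 2) := by
    rw [htpow, div_pow]
    field_simp
  -- key finite-sum estimate
  have key : ∀ u : Finset ℕ, ∑ i ∈ u, Real.exp (-(t * lam i ^ 2)) ≤
      C * 2 ^ m * B * t ^ (-(m : ℝ) / 2) := by
    intro u
    set K : ℕ → ℕ := fun i => ⌊s * |lam i|⌋₊ with hKdef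
    have step1 : ∑ i ∈ u, Real.exp (-(t * lam i ^ 2)) =
        ∑ k ∈ u.image K, ∑ i ∈ u.filter (fun i => K i = k), Real.exp (-(t * lam i ^ 2)) :=
      (Finset.sum_fiberwise_of_maps_to (fun i hi => Finset.mem_image_of_mem K hi) _).symm
    have step2 : ∀ k ∈ u.image K,
        ∑ i ∈ u.filter (fun i => K i = k), Real.exp (-(t * lam i ^ 2)) ≤ g k := by
      intro k _
      have hT : (0 : ℝ) ≤ ((k : ℝ) + 1) / s := by positivity
      obtain ⟨hfin, hcard⟩ := hWb (((k : ℝ) + 1) / s) hT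
      have hsub : u.filter (fun i => K i = k) ⊆ hfin.toFinset := by
        intro i hi
        rw [Finset.mem_filter] at hi
        rw [Set.Finite.mem_toFinset, Set.mem_setOf_eq]
        have h1 : s * |lam i| < (k : ℝ) + 1 := by
          rw [← hi.2]
          exact Nat.lt_floor_add_one _
        rw [le_div_iff₀ hs, mul_comm]
        exact h1.le
      have hcard' : ((u.filter (fun i => K i = k)).card : ℝ) ≤ C * (1 + ((k : ℝ) + 1) / s) ^ m := by
        refine le_trans ?_ hcard
        have := Finset.card_le_card hsub
        rw [Set.ncard_eq_toFinset_card _ hfin]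
        exact_mod_cast this
      have hterm : ∀ i ∈ u.filter (fun i => K i = k),
          Real.exp (-(t * lam i ^ 2)) ≤ Real.exp (-(k : ℝ) ^ 2) := by
        intro i hi
        rw [Finset.mem_filter] at hi
        refine Real.exp_le_exp.2 (neg_le_neg ?_)
        have h1 : (k : ℝ) ≤ s * |lam i| := by
          rw [← hi.2]
          exact Nat.floor_le (by positivity)
        have h2 : t * lam i ^ 2 = (s * |lam i|) ^ 2 := by
          rw [mul_pow, hsdef, Real.sq_sqrt ht.le, sq_abs]
        rw [h2]
        exact pow_le_pow_left₀ (Nat.cast_nonneg k) h1 2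
      calc ∑ i ∈ u.filter (fun i => K i = k), Real.exp (-(t * lam i ^ 2))
          ≤ ∑ _i ∈ u.filter (fun i => K i = k), Real.exp (-(k : ℝ) ^ 2) :=
            Finset.sum_le_sum hterm
        _ = ((u.filter (fun i => K i = k)).card : ℝ) * Real.exp (-(k : ℝ) ^ 2) := by
            rw [Finset.sum_const, nsmul_eq_mul]
        _ ≤ (C * (1 + ((k : ℝ) + 1) / s) ^ m) * Real.exp (-(k : ℝ) ^ 2) :=
            mul_le_mul_of_nonneg_right hcard' (Real.exp_nonneg _)
        _ ≤ g k := by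
            rw [hgdef]
            refine mul_le_mul_of_nonneg_right (mul_le_mul_of_nonneg_left
              (pow_le_pow_left₀ (by positivity) ?_ m) hC.le) (Real.exp_nonneg _)
            have h1 : (1 : ℝ) ≤ ((k : ℝ) + 1) / s := by
              rw [le_div_iff₀ hs, one_mul]
              have hk0 : (0 : ℝ) ≤ (k : ℝ) := Nat.cast_nonneg k
              linarith
            have h2 : 2 * ((k : ℝ) + 1) / s = ((k : ℝ) + 1) / s + ((k : ℝ) + 1) / s := by ring
            linarith
    calc ∑ i ∈ u, Real.exp (-(t * lam i ^ 2))
        = ∑ k ∈ u.image K, ∑ i ∈ u.filter (fun i => K i = k), Real.exp (-(t * lam i ^ 2)) :=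
          step1
      _ ≤ ∑ k ∈ u.image K, g k := Finset.sum_le_sum step2
      _ ≤ ∑' k, g k := Summable.sum_le_tsum _ (fun k _ => by rw [hgeq]; positivity) hgsum
      _ = C * (2 / s) ^ m * B := hgtsum
      _ = C * 2 ^ m * B * t ^ (-(m : ℝ) / 2) := hfinal
  have hnn : ∀ n : ℕ, 0 ≤ Real.exp (-(t * lam n ^ 2)) := fun n => Real.exp_nonneg _
  have hsummable : Summable (fun n : ℕ => Real.exp (-(t * lam n ^ 2))) :=
    summable_of_sum_range_le hnn fun n => key _
  exact ⟨hsummable, Real.tsum_le_of_sum_range_le hnn fun n => key _⟩
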